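/- Let γ_1, …, γ_n ∈ ℝ^n and s_1, …, s_n ∈ ℝ, and consider the random binomial system h given by h_k(x) = a_k exp(γ_kᵀx + s_k) + b_k, k = 1, …, n, where the a_k and b_k are i.i.d. standard Gaussian random variables. Let B := {x ∈ ℝ^n : γ_kᵀx + s_k ≤ 0 for all k}. Then the expected number of regular zeros of h in B satisfies E_h #Z_r(h, B) ≤ 4^{-n}. -/
import Mathlib

open MeasureTheory ProbabilityTheory

/-- The random binomial system `h_k(x) = a_k exp(γ_kᵀ x + s_k) + b_k`. -/
noncomputable def binomialSystem {n : ℕ} (γ : Fin n → Fin n → ℝ) (s : Fin n → ℝ)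
    (ab : (Fin n → ℝ) × (Fin n → ℝ)) (x : Fin n → ℝ) : Fin n → ℝ :=
  fun k => ab.1 k * Real.exp ((∑ i, γ k i * x i) + s k) + ab.2 k

noncomputable def binLin {n : ℕ} (γ : Fin n → Fin n → ℝ) (k : Fin n) :
    (Fin n → ℝ) →L[ℝ] ℝ :=
  ∑ i, γ k i • ContinuousLinearMap.proj (R := ℝ) (φ := fun _ : Fin n => ℝ) i

lemma binLin_apply {n : ℕ} (γ : Fin n → Fin n → ℝ) (k : Fin n) (x : Fin n → ℝ) :
    binLin γ k x = ∑ i, γ k i * x i := by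
  simp [binLin, ContinuousLinearMap.sum_apply]

lemma binomial_hasFDerivAt {n : ℕ} (γ : Fin n → Fin n → ℝ) (s : Fin n → ℝ)
    (ab : (Fin n → ℝ) × (Fin n → ℝ)) (x : Fin n → ℝ) :
    HasFDerivAt (binomialSystem γ s ab)
      (ContinuousLinearMap.pi fun k =>
        (ab.1 k * Real.exp ((∑ i, γ k i * x i) + s k)) • binLin γ k) x := by
  apply hasFDerivAt_pi.2
  intro k
  have h1 : HasFDerivAt (fun y : Fin n → ℝ => (∑ i, γ k i * y i) + s k) (binLin γ k) x := by
    have := ((binLin γ k).hasFDerivAt (x := x)).add_const (s k)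
    simpa [binLin_apply] using this
  have h2 := (h1.exp.const_mul (ab.1 k)).add_const (ab.2 k)
  simp only [binLin_apply, smul_smul] at h2 ⊢
  exact h2

theorem expected_regular_zeros_binomial_le
    (n : ℕ) (γ : Fin n → Fin n → ℝ) (s : Fin n → ℝ)
    (B : Set (Fin n → ℝ)) (hB : B = {x | ∀ k, (∑ i, γ k i * x i) + s k ≤ 0}) :
    ∫⁻ ab, (({x | x ∈ B ∧ binomialSystem γ s ab x = 0 ∧
          Function.Bijective (fderiv ℝ (binomialSystem γ s ab) x)}).encard : ENNReal)
        ∂((Measure.pi fun _ : Fin n => gaussianReal 0 1).prod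
            (Measure.pi fun _ : Fin n => gaussianReal 0 1))
      ≤ ((4 : ENNReal) ^ n)⁻¹ := by
  classical
  set g : Measure ℝ := gaussianReal 0 1 with hg
  set ν : Measure (ℝ × ℝ) := g.prod g with hν
  set μ : Measure ((Fin n → ℝ) × (Fin n → ℝ)) :=
    (Measure.pi fun _ : Fin n => g).prod (Measure.pi fun _ : Fin n => g) with hμ
  set Q : Set (ℝ × ℝ) := {p | p.2 ^ 2 ≤ p.1 ^ 2 ∧ p.1 * p.2 ≤ 0} with hQ
  have hQm : MeasurableSet Q := by
    rw [hQ, Set.setOf_and]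
    exact (measurableSet_le (by fun_prop) (by fun_prop)).inter
      (measurableSet_le (by fun_prop) measurable_const)
  set E : Set ((Fin n → ℝ) × (Fin n → ℝ)) :=
    {ab | ∀ k, (ab.2 k) ^ 2 ≤ (ab.1 k) ^ 2 ∧ ab.1 k * ab.2 k ≤ 0} with hE
  have hEm : MeasurableSet E := by
    have : E = ⋂ k, {ab : (Fin n → ℝ) × (Fin n → ℝ) |
        (ab.2 k) ^ 2 ≤ (ab.1 k) ^ 2 ∧ ab.1 k * ab.2 k ≤ 0} := by
      ext p; simp [hE, Set.mem_iInter]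
    rw [this]
    refine MeasurableSet.iInter fun k => ?_
    rw [Set.setOf_and]
    exact (measurableSet_le (by fun_prop) (by fun_prop)).inter
      (measurableSet_le (by fun_prop) measurable_const)
  -- pointwise bound
  have hpt : ∀ ab : (Fin n → ℝ) × (Fin n → ℝ),
      (({x | x ∈ B ∧ binomialSystem γ s ab x = 0 ∧
          Function.Bijective (fderiv ℝ (binomialSystem γ s ab) x)}).encard : ENNReal)
        ≤ E.indicator (fun _ => 1) ab := by
    intro ab
    set S := {x | x ∈ B ∧ binomialSystem γ s ab x = 0 ∧
        Function.Bijective (fderiv ℝ (binomialSystem γ s ab) x)} with hS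
    rcases Set.eq_empty_or_nonempty S with h | ⟨x, hx⟩
    · simp [h]
    obtain ⟨hxB, hx0, hxbij⟩ := hx
    have hD := binomial_hasFDerivAt γ s ab x
    rw [hD.fderiv] at hxbij
    -- each a_k ≠ 0
    have hane : ∀ k, ab.1 k ≠ 0 := by
      intro k hk
      obtain ⟨v, hv⟩ := hxbij.2 (Pi.single k 1)
      have := congrFun hv k
      simp [ContinuousLinearMap.pi_apply, hk, Pi.single_eq_same] at this
    -- zero equations
    have hzero : ∀ k, ab.1 k * Real.exp ((∑ i, γ k i * x i) + s k) + ab.2 k = 0 := by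
      intro k
      have := congrFun hx0 k
      simpa [binomialSystem] using this
    -- membership in E
    have habE : ab ∈ E := by
      intro k
      have hc : (∑ i, γ k i * x i) + s k ≤ 0 := by
        rw [hB] at hxB; exact hxB k
      have he1 : Real.exp ((∑ i, γ k i * x i) + s k) ≤ 1 := Real.exp_le_one_iff.2 hc
      have hepos : 0 < Real.exp ((∑ i, γ k i * x i) + s k) := Real.exp_pos _
      have hz := hzero k
      have hb : ab.2 k = -(ab.1 k * Real.exp ((∑ i, γ k i * x i) + s k)) := by linarith
      have he2 : Real.exp ((∑ i, γ k i * x i) + s k) ^ 2 ≤ 1 := by nlinarith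
      constructor
      · calc (ab.2 k) ^ 2
            = ab.1 k ^ 2 * Real.exp ((∑ i, γ k i * x i) + s k) ^ 2 := by rw [hb]; ring
          _ ≤ ab.1 k ^ 2 * 1 := mul_le_mul_of_nonneg_left he2 (sq_nonneg _)
          _ = ab.1 k ^ 2 := mul_one _
      · calc ab.1 k * ab.2 k
            = -(ab.1 k ^ 2 * Real.exp ((∑ i, γ k i * x i) + s k)) := by rw [hb]; ring
          _ ≤ 0 := neg_nonpos.2 (mul_nonneg (sq_nonneg _) hepos.le)
    -- uniqueness
    have hsub : S.encard ≤ 1 := by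
      rw [Set.encard_le_one_iff]
      rintro y z ⟨hyB, hy0, -⟩ ⟨hzB, hz0, -⟩
      have key : ∀ w : Fin n → ℝ, w ∈ B → binomialSystem γ s ab w = 0 →
          ∀ k, (∑ i, γ k i * w i) = ∑ i, γ k i * x i := by
        intro w _ hw0 k
        have h1 : ab.1 k * Real.exp ((∑ i, γ k i * w i) + s k) + ab.2 k = 0 := by
          have := congrFun hw0 k
          simpa [binomialSystem] using this
        have h2 := hzero k
        have hEE : Real.exp ((∑ i, γ k i * w i) + s k)
            = Real.exp ((∑ i, γ k i * x i) + s k) := by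
          have h3 : ab.1 k * (Real.exp ((∑ i, γ k i * w i) + s k)
              - Real.exp ((∑ i, γ k i * x i) + s k)) = 0 := by
            rw [mul_sub]; linarith
          rcases mul_eq_zero.mp h3 with h | h
          · exact absurd h (hane k)
          · exact sub_eq_zero.mp h
        have := Real.exp_injective hEE
        linarith [this]
      have hLy : ∀ k, binLin γ k (y - z) = 0 := by
        intro k
        have h1 := key y hyB hy0 k
        have h2 := key z hzB hz0 k
        rw [map_sub, binLin_apply, binLin_apply, h1, h2, sub_self]
      have hD0 : (ContinuousLinearMap.pi fun k =>
          (ab.1 k * Real.exp ((∑ i, γ k i * x i) + s k)) • binLin γ k) (y - z) = 0 := by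
        ext k
        simp [ContinuousLinearMap.pi_apply, hLy k]
      have := hxbij.1 (by rw [hD0, map_zero] :
        (ContinuousLinearMap.pi fun k =>
          (ab.1 k * Real.exp ((∑ i, γ k i * x i) + s k)) • binLin γ k) (y - z)
        = (ContinuousLinearMap.pi fun k =>
          (ab.1 k * Real.exp ((∑ i, γ k i * x i) + s k)) • binLin γ k) 0)
      exact sub_eq_zero.mp this
    have hcast : (S.encard : ENNReal) ≤ 1 := by exact_mod_cast hsub
    rw [Set.indicator_of_mem habE]
    exact hcast
  -- integral bound
  have hint : ∫⁻ ab, (({x | x ∈ B ∧ binomialSystem γ s ab x = 0 ∧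
          Function.Bijective (fderiv ℝ (binomialSystem γ s ab) x)}).encard : ENNReal) ∂μ
      ≤ μ E := by
    calc _ ≤ ∫⁻ ab, E.indicator (fun _ => 1) ab ∂μ := lintegral_mono hpt
      _ = μ E := by rw [lintegral_indicator hEm]; simp
  refine hint.trans ?_
  -- measure of E
  have hmp := measurePreserving_arrowProdEquivProdArrow ℝ ℝ (Fin n)
    (fun _ => g) (fun _ => g)
  have hpre : (MeasurableEquiv.arrowProdEquivProdArrow ℝ ℝ (Fin n)) ⁻¹' E
      = Set.pi Set.univ (fun _ : Fin n => Q) := by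
    ext f
    simp [hE, hQ, MeasurableEquiv.arrowProdEquivProdArrow, Equiv.arrowProdEquivProdArrow,
      Set.mem_pi]
  have hμE : μ E = (ν Q) ^ n := by
    rw [← hmp.measure_preimage hEm.nullMeasurableSet, hpre, Measure.pi_pi]
    simp [hν, Finset.prod_const]
  -- ν Q ≤ 1/4
  have hgneg : MeasurePreserving (fun x : ℝ => -x) g g := by
    refine ⟨measurable_neg, ?_⟩
    have h := gaussianReal_map_const_mul (μ := 0) (v := 1) (-1)
    have h2 : (fun x : ℝ => -x) = ((-1 : ℝ) * ·) := by funext x; ring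
    rw [hg, h2, h]
    congr 1
    · ring
    · ext; norm_num
  have hswap : MeasurePreserving (Prod.swap : ℝ × ℝ → ℝ × ℝ) ν ν :=
    Measure.measurePreserving_swap
  have hm3 : MeasurePreserving (fun p : ℝ × ℝ => (p.1, -p.2)) ν ν :=
    (MeasurePreserving.id g).prod hgneg
  have hm4 : MeasurePreserving (fun p : ℝ × ℝ => (p.2, -p.1)) ν ν := hm3.comp hswap
  set T2 := Prod.swap ⁻¹' Q with hT2
  set T3 := (fun p : ℝ × ℝ => (p.1, -p.2)) ⁻¹' Q with hT3
  set T4 := (fun p : ℝ × ℝ => (p.2, -p.1)) ⁻¹' Q with hT4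
  have hQnm := hQm.nullMeasurableSet (μ := ν)
  have hνT2 : ν T2 = ν Q := hswap.measure_preimage hQnm
  have hνT3 : ν T3 = ν Q := hm3.measure_preimage hQnm
  have hνT4 : ν T4 = ν Q := hm4.measure_preimage hQnm
  -- null set of boundaries
  have hg0 : ∀ a : ℝ, g {a} = 0 := fun a =>
    (gaussianReal_absolutelyContinuous 0 one_ne_zero) (Real.volume_singleton)
  have hdiag : ∀ c : ℝ, ν {p : ℝ × ℝ | p.1 = c * p.2} = 0 := by
    intro c
    have hm : MeasurableSet {p : ℝ × ℝ | p.1 = c * p.2} :=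
      measurableSet_eq_fun measurable_fst (measurable_snd.const_mul c)
    rw [hν, ← Measure.prod_swap, Measure.map_apply measurable_swap hm,
      Measure.prod_apply (measurable_swap hm)]
    have : ∀ a : ℝ, (Prod.mk a ⁻¹' (Prod.swap ⁻¹' {p : ℝ × ℝ | p.1 = c * p.2})) = {c * a} := by
      intro a; ext b; simp [eq_comm]
    simp_rw [this]
    simp [hg0]
  have hax : ν {p : ℝ × ℝ | p.1 = 0} = 0 := by
    simpa using hdiag 0
  have hN : ν ({p : ℝ × ℝ | p.1 * p.2 = 0} ∪ {p : ℝ × ℝ | p.1 ^ 2 = p.2 ^ 2}) = 0 := by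
    have h1 : {p : ℝ × ℝ | p.1 * p.2 = 0} ⊆
        {p : ℝ × ℝ | p.1 = 0} ∪ Prod.swap ⁻¹' {p : ℝ × ℝ | p.1 = 0} := by
      rintro ⟨a, b⟩ hp
      rcases mul_eq_zero.mp hp with h | h
      · exact Or.inl h
      · exact Or.inr h
    have h2 : {p : ℝ × ℝ | p.1 ^ 2 = p.2 ^ 2} ⊆
        {p : ℝ × ℝ | p.1 = 1 * p.2} ∪ {p : ℝ × ℝ | p.1 = (-1) * p.2} := by
      rintro ⟨a, b⟩ hp
      rcases sq_eq_sq_iff_eq_or_eq_neg.mp hp with h | h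
      · exact Or.inl (by simpa using h)
      · exact Or.inr (by simpa using h)
    have hswap0 : ν (Prod.swap ⁻¹' {p : ℝ × ℝ | p.1 = 0}) = 0 := by
      rw [hswap.measure_preimage
        ((measurableSet_eq_fun measurable_fst measurable_const).nullMeasurableSet)]
      exact hax
    refine measure_union_null ?_ ?_
    · exact measure_mono_null h1 (measure_union_null hax hswap0)
    · exact measure_mono_null h2 (measure_union_null (hdiag 1) (hdiag (-1)))
  set N := {p : ℝ × ℝ | p.1 * p.2 = 0} ∪ {p : ℝ × ℝ | p.1 ^ 2 = p.2 ^ 2} with hNdef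
  -- AEDisjointness
  have hd12 : AEDisjoint ν Q T2 := by
    refine measure_mono_null ?_ hN
    rintro ⟨a, b⟩ ⟨⟨h1, _⟩, ⟨h2, _⟩⟩
    dsimp only at h1 h2
    exact Or.inr (le_antisymm h2 h1)
  have hd13 : AEDisjoint ν Q T3 := by
    refine measure_mono_null ?_ hN
    rintro ⟨a, b⟩ ⟨⟨_, h1⟩, ⟨_, h2⟩⟩
    dsimp only at h1 h2
    exact Or.inl (le_antisymm h1 (by nlinarith [h2]))
  have hd14 : AEDisjoint ν Q T4 := by
    refine measure_mono_null ?_ hN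
    rintro ⟨a, b⟩ ⟨⟨h1, _⟩, ⟨h2, _⟩⟩
    dsimp only at h1 h2
    exact Or.inr (le_antisymm (by nlinarith [h2]) h1)
  have hd23 : AEDisjoint ν T2 T3 := by
    refine measure_mono_null ?_ hN
    rintro ⟨a, b⟩ ⟨⟨h1, _⟩, ⟨h2, _⟩⟩
    dsimp only at h1 h2
    exact Or.inr (le_antisymm h1 (by nlinarith [h2]))
  have hd24 : AEDisjoint ν T2 T4 := by
    refine measure_mono_null ?_ hN
    rintro ⟨a, b⟩ ⟨⟨_, h1⟩, ⟨_, h2⟩⟩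
    simp only [Prod.swap_prod_mk] at h1
    dsimp only at h1 h2
    exact Or.inl (le_antisymm (by nlinarith [h1]) (by nlinarith [h2]))
  have hd34 : AEDisjoint ν T3 T4 := by
    refine measure_mono_null ?_ hN
    rintro ⟨a, b⟩ ⟨⟨h1, _⟩, ⟨h2, _⟩⟩
    dsimp only at h1 h2
    exact Or.inr (le_antisymm (by nlinarith [h2]) (by nlinarith [h1]))
  -- covering
  have hcover : Q ∪ (T2 ∪ (T3 ∪ T4)) = Set.univ := by
    ext ⟨a, b⟩
    simp only [Set.mem_union, Set.mem_preimage, hQ, Set.mem_setOf_eq, Prod.swap_prod_mk,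
      Set.mem_univ, iff_true, hT2, hT3, hT4]
    rcases le_total (b ^ 2) (a ^ 2) with h1 | h1 <;> rcases le_total (a * b) 0 with h2 | h2
    · exact Or.inl ⟨h1, h2⟩
    · refine Or.inr (Or.inr (Or.inl ⟨by simpa using h1, by nlinarith⟩))
    · refine Or.inr (Or.inl ⟨by simpa using h1, by nlinarith⟩)
    · refine Or.inr (Or.inr (Or.inr ⟨by simpa using h1, by nlinarith⟩))
  have hT2nm : NullMeasurableSet T2 ν := (hswap.measurable hQm).nullMeasurableSet
  have hT3nm : NullMeasurableSet T3 ν := (hm3.measurable hQm).nullMeasurableSet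
  have hT4nm : NullMeasurableSet T4 ν := (hm4.measurable hQm).nullMeasurableSet
  have hone : (1 : ENNReal) = ν Q + (ν T2 + (ν T3 + ν T4)) := by
    have hu : ν Set.univ = 1 := measure_univ
    rw [← hu, ← hcover,
      measure_union₀ (hT2nm.union (hT3nm.union hT4nm))
        (hd12.union_right (hd13.union_right hd14)),
      measure_union₀ (hT3nm.union hT4nm) (hd23.union_right hd24),
      measure_union₀ hT4nm hd34]
  have hQval : ν Q ≤ 4⁻¹ := by
    rw [ENNReal.le_inv_iff_mul_le]
    have : ν Q * 4 = ν Q + (ν T2 + (ν T3 + ν T4)) := by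
      rw [hνT2, hνT3, hνT4]; ring
    rw [this, ← hone]
  rw [hμE, ENNReal.inv_pow]
  exact pow_le_pow_left' hQval n
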